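/- Let r₁ > r > 0, s > 0, and let c ≥ 1 be such that −r₁|y − x|^{1/s} ≤ r₁|x|^{1/s} − (r₁/c)|y|^{1/s} for all x, y ∈ ℝⁿ. Then for any 0 < r < r₁/(2c): ∫_{ℝⁿ} e^{−r₁|y−x|^{1/s}} e^{r|y|^{1/s}} dy ≤ B e^{2cr|x|^{1/s}}, where B = ∫ e^{−r|y|^{1/s}} dy < ∞. -/

import Mathlib

open MeasureTheory Filter Real in
/-- Sub-exponential decay beats any polynomial: bound for `exp (-a * t ^ p)`. -/
lemma aux_exp_rpow_bound {a p K : ℝ} (ha : 0 < a) (hp : 0 < p) (hK : 0 ≤ K) :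
    ∃ C : ℝ, 0 ≤ C ∧ ∀ t : ℝ, 0 ≤ t →
      Real.exp (-a * t ^ p) ≤ C * (1 + t) ^ (-K) := by
  set f : ℝ → ℝ := fun t => (1 + t) ^ K * Real.exp (-a * t ^ p) with hf
  have hcont : Continuous f := by
    apply Continuous.mul
    · exact (continuous_const.add continuous_id).rpow_const fun x => Or.inr hK
    · exact (continuous_const.mul (continuous_id.rpow_const fun x => Or.inr hp.le)).rexp
  -- `f` tends to 0 at infinity
  have h1 : (fun u : ℝ => u ^ (K / p)) =o[atTop] fun u => Real.exp (a * u) :=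
    isLittleO_rpow_exp_pos_mul_atTop _ ha
  have h2 : (fun t : ℝ => (t ^ p) ^ (K / p)) =o[atTop] fun t => Real.exp (a * t ^ p) :=
    h1.comp_tendsto (tendsto_rpow_atTop hp)
  have h3 : (fun t : ℝ => (1 + t) ^ K) =o[atTop] fun t => Real.exp (a * t ^ p) := by
    refine (Asymptotics.IsBigO.trans_isLittleO ?_ h2)
    rw [Asymptotics.isBigO_iff]
    refine ⟨(2 : ℝ) ^ K, ?_⟩
    filter_upwards [eventually_ge_atTop (1 : ℝ)] with t ht
    have ht0 : (0:ℝ) ≤ t := by linarith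
    have h4 : (t ^ p) ^ (K / p) = t ^ K := by
      rw [← Real.rpow_mul ht0]
      congr 1; field_simp
    rw [h4, Real.norm_eq_abs, Real.norm_eq_abs,
      abs_of_nonneg (Real.rpow_nonneg (by linarith) _),
      abs_of_nonneg (Real.rpow_nonneg ht0 _)]
    calc (1 + t) ^ K ≤ (2 * t) ^ K := by
          apply Real.rpow_le_rpow (by linarith) (by linarith) hK
      _ = 2 ^ K * t ^ K := Real.mul_rpow (by norm_num) ht0
  have htend : Tendsto f atTop (nhds 0) := by
    have := h3.tendsto_div_nhds_zero
    refine this.congr' ?_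
    filter_upwards [eventually_ge_atTop (0 : ℝ)] with t ht
    rw [hf]
    simp only [div_eq_mul_inv, ← Real.exp_neg, neg_mul]
  -- get an eventual bound and a bound on a compact interval
  obtain ⟨T, hT⟩ := (htend.eventually (gt_mem_nhds one_pos)).exists_forall_of_atTop
  set T' : ℝ := max T 0
  obtain ⟨C₁, hC₁⟩ :=
    (isCompact_Icc (a := (0:ℝ)) (b := T')).exists_bound_of_continuousOn hcont.continuousOn
  refine ⟨max C₁ 1, le_trans zero_le_one (le_max_right _ _), fun t ht => ?_⟩
  have hft : f t ≤ max C₁ 1 := by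
    rcases le_or_gt t T' with h | h
    · exact le_trans (le_trans (le_abs_self _) (hC₁ t ⟨ht, h⟩)) (le_max_left _ _)
    · exact le_trans (hT t (le_trans (le_max_left T 0) h.le)).le (le_max_right _ _)
  have h1t : (0:ℝ) < 1 + t := by linarith
  have hpow : (0:ℝ) < (1 + t) ^ K := Real.rpow_pos_of_pos h1t _
  rw [Real.rpow_neg h1t.le, ← mul_le_mul_iff_of_pos_right hpow]
  calc Real.exp (-a * t ^ p) * (1 + t) ^ K = f t := by rw [hf]; ring
    _ ≤ max C₁ 1 := hft
    _ = max C₁ 1 * ((1 + t) ^ K)⁻¹ * (1 + t) ^ K := by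
        field_simp
open MeasureTheory in
/-- Integrability of `exp (-a * ‖y‖ ^ p)` on Euclidean space. -/
lemma aux_integrable (n : ℕ) {a p : ℝ} (ha : 0 < a) (hp : 0 < p) :
    Integrable (fun y : EuclideanSpace ℝ (Fin n) => Real.exp (-a * ‖y‖ ^ p)) := by
  obtain ⟨C, hC0, hC⟩ := aux_exp_rpow_bound ha hp (by positivity : (0:ℝ) ≤ (n:ℝ) + 1)
  have hnr : (Module.finrank ℝ (EuclideanSpace ℝ (Fin n)) : ℝ) < (n:ℝ) + 1 := by
    rw [finrank_euclideanSpace_fin]; exact lt_add_one _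
  refine ((integrable_one_add_norm hnr).const_mul C).mono' ?_ ?_
  · exact ((continuous_const.mul
      (continuous_norm.rpow_const fun x => Or.inr hp.le)).rexp).aestronglyMeasurable
  · filter_upwards with y
    rw [Real.norm_eq_abs, abs_of_pos (Real.exp_pos _)]
    exact hC ‖y‖ (norm_nonneg y)

open MeasureTheory in
theorem stmt_17 (n : ℕ) (s r₁ c r : ℝ) (hs : 0 < s) (hr₁ : 0 < r₁) (hc : 1 ≤ c)
    (hineq : ∀ x y : EuclideanSpace ℝ (Fin n),
      -r₁ * ‖y - x‖ ^ (1/s) ≤ r₁ * ‖x‖ ^ (1/s) - (r₁ / c) * ‖y‖ ^ (1/s))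
    (hr : 0 < r) (hrr : r < r₁ / (2 * c)) :
    Integrable (fun y : EuclideanSpace ℝ (Fin n) => Real.exp (-r * ‖y‖ ^ (1/s))) ∧
    ∀ x : EuclideanSpace ℝ (Fin n),
      (∫ y : EuclideanSpace ℝ (Fin n),
          Real.exp (-r₁ * ‖y - x‖ ^ (1/s)) * Real.exp (r * ‖y‖ ^ (1/s))) ≤
        (∫ y : EuclideanSpace ℝ (Fin n), Real.exp (-r * ‖y‖ ^ (1/s))) *
          Real.exp (2 * c * r * ‖x‖ ^ (1/s)) := by
  have hp : (0:ℝ) < 1 / s := by positivity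
  have hInt : Integrable (fun y : EuclideanSpace ℝ (Fin n) =>
      Real.exp (-r * ‖y‖ ^ (1/s))) := aux_integrable n hr hp
  refine ⟨hInt, fun x => ?_⟩
  have hc0 : (0:ℝ) < c := lt_of_lt_of_le zero_lt_one hc
  have h2cr : 2 * c * r < r₁ := by
    rw [lt_div_iff₀ (by positivity)] at hrr; linarith
  -- pointwise bound
  have key : ∀ y : EuclideanSpace ℝ (Fin n),
      Real.exp (-r₁ * ‖y - x‖ ^ (1/s)) * Real.exp (r * ‖y‖ ^ (1/s)) ≤
        Real.exp (-r * ‖y‖ ^ (1/s)) * Real.exp (2 * c * r * ‖x‖ ^ (1/s)) := by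
    intro y
    rw [← Real.exp_add, ← Real.exp_add, Real.exp_le_exp]
    set A := ‖y - x‖ ^ (1/s) with hA
    set X := ‖x‖ ^ (1/s) with hX
    set Y := ‖y‖ ^ (1/s) with hY
    have hA0 : 0 ≤ A := Real.rpow_nonneg (norm_nonneg _) _
    have h1 := hineq x y
    have hdiv : r₁ / c = r₁ * (1 / c) := by field_simp
    rw [hdiv, ← hA, ← hX, ← hY] at h1
    have hAXY : -A ≤ X - (1/c) * Y := by nlinarith [h1, hr₁]
    have hint1 : 0 ≤ (r₁ - 2 * c * r) * A :=
      mul_nonneg (sub_nonneg.mpr h2cr.le) hA0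
    have hint2 : 2 * c * r * (-A) ≤ 2 * c * r * (X - (1/c) * Y) :=
      mul_le_mul_of_nonneg_left hAXY (by positivity)
    have hcc3 : 2 * c * r * ((1/c) * Y) = 2 * r * Y := by field_simp
    nlinarith [hint1, hint2, hcc3]
  have hInt2 : Integrable (fun y : EuclideanSpace ℝ (Fin n) =>
      Real.exp (-r * ‖y‖ ^ (1/s)) * Real.exp (2 * c * r * ‖x‖ ^ (1/s))) :=
    hInt.mul_const _
  have hmeas : AEStronglyMeasurable (fun y : EuclideanSpace ℝ (Fin n) =>
      Real.exp (-r₁ * ‖y - x‖ ^ (1/s)) * Real.exp (r * ‖y‖ ^ (1/s))) volume := by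
    apply Continuous.aestronglyMeasurable
    apply Continuous.mul
    · exact (continuous_const.mul ((continuous_id.sub continuous_const).norm.rpow_const
        fun y => Or.inr hp.le)).rexp
    · exact (continuous_const.mul
        (continuous_norm.rpow_const fun y => Or.inr hp.le)).rexp
  have hInt1 : Integrable (fun y : EuclideanSpace ℝ (Fin n) =>
      Real.exp (-r₁ * ‖y - x‖ ^ (1/s)) * Real.exp (r * ‖y‖ ^ (1/s))) := by
    refine hInt2.mono' hmeas ?_
    filter_upwards with y
    rw [Real.norm_eq_abs, abs_of_pos (by positivity)]
    exact key y
  calc (∫ y : EuclideanSpace ℝ (Fin n),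
        Real.exp (-r₁ * ‖y - x‖ ^ (1/s)) * Real.exp (r * ‖y‖ ^ (1/s)))
      ≤ ∫ y : EuclideanSpace ℝ (Fin n),
        Real.exp (-r * ‖y‖ ^ (1/s)) * Real.exp (2 * c * r * ‖x‖ ^ (1/s)) :=
      integral_mono hInt1 hInt2 key
    _ = (∫ y : EuclideanSpace ℝ (Fin n), Real.exp (-r * ‖y‖ ^ (1/s))) *
        Real.exp (2 * c * r * ‖x‖ ^ (1/s)) := integral_mul_const _ _
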